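/- In the ring of formal power series ℚ[[y₁,…,y_m]], the following identity holds: ∑_{j=0}^{2m} (−1)^j (j+1) · s_j(e^{y₁}, e^{−y₁}, …, e^{y_m}, e^{−y_m}) = (m+1) ∏_{j=1}^{m} (1 − e^{y_j})(1 − e^{−y_j}), where s_j denotes the j-th elementary symmetric polynomial in the 2m listed arguments. -/

import Mathlib

open Finset

/-- The formal exponential `e^{c·y_j}` in `ℚ[[y₁,…,y_m]]`: its coefficient at the
monomial `y_j^k` is `c^k/k!`, and it vanishes on monomials involving other variables. -/
noncomputable def expCMul {m : ℕ} (c : ℤ) (j : Fin m) : MvPowerSeries (Fin m) ℚ :=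
  fun d => if d.support ⊆ {j} then (c : ℚ) ^ (d j) / (Nat.factorial (d j)) else 0

lemma expCMul_coeff {m : ℕ} (c : ℤ) (j : Fin m) (d : Fin m →₀ ℕ) :
    MvPowerSeries.coeff d (expCMul c j)
      = if d.support ⊆ {j} then (c : ℚ) ^ (d j) / (Nat.factorial (d j)) else 0 := rfl

lemma expCMul_mul {m : ℕ} (c c' : ℤ) (j : Fin m) :
    expCMul c j * expCMul c' j = expCMul (c + c') j := by
  ext d
  rw [MvPowerSeries.coeff_mul]
  by_cases hd : d.support ⊆ {j}
  · obtain ⟨k, rfl⟩ := Finsupp.support_subset_singleton'.mp hd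
    rw [Finsupp.antidiagonal_single, Finset.sum_map,
      Finset.Nat.sum_antidiagonal_eq_sum_range_succ_mk]
    simp only [Function.Embedding.coe_prodMap, Function.Embedding.coeFn_mk, Prod.map_apply,
      expCMul_coeff, Finsupp.support_single_subset, if_true, Finsupp.single_eq_same]
    push_cast
    rw [add_pow, Finset.sum_div]
    refine Finset.sum_congr rfl fun i hi => ?_
    rw [Finset.mem_range, Nat.lt_succ_iff] at hi
    rw [Nat.cast_choose ℚ hi]
    have h1 : (Nat.factorial i : ℚ) ≠ 0 := Nat.cast_ne_zero.mpr (Nat.factorial_ne_zero i)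
    have h2 : (Nat.factorial (k - i) : ℚ) ≠ 0 := Nat.cast_ne_zero.mpr (Nat.factorial_ne_zero _)
    have h3 : (Nat.factorial k : ℚ) ≠ 0 := Nat.cast_ne_zero.mpr (Nat.factorial_ne_zero k)
    push_cast
    field_simp
  · rw [expCMul_coeff, if_neg hd]
    refine Finset.sum_eq_zero fun p hp => ?_
    rw [Finset.HasAntidiagonal.mem_antidiagonal] at hp
    by_cases h1 : p.1.support ⊆ {j}
    · have h2 : ¬ p.2.support ⊆ {j} := by
        intro h2
        apply hd
        rw [← hp]
        exact fun a ha => by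
          rcases Finset.mem_union.mp (Finsupp.support_add ha) with h | h
          exacts [h1 h, h2 h]
      rw [expCMul_coeff (c := c'), if_neg h2, mul_zero]
    · rw [expCMul_coeff (c := c), if_neg h1, zero_mul]

lemma expCMul_zero {m : ℕ} (j : Fin m) : expCMul (0 : ℤ) j = 1 := by
  ext d
  rw [expCMul_coeff, MvPowerSeries.coeff_one]
  by_cases hd : d = 0
  · subst hd; simp
  · rw [if_neg hd]
    by_cases hs : d.support ⊆ {j}
    · rw [if_pos hs]
      have : d j ≠ 0 := by
        intro h
        apply hd
        have := Finsupp.support_subset_singleton.mp hs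
        rw [h] at this
        simpa using this
      simp [zero_pow this]
    · rw [if_neg hs]

lemma expCMul_one_mul_neg_one {m : ℕ} (j : Fin m) :
    expCMul 1 j * expCMul (-1) j = 1 := by
  rw [expCMul_mul]; norm_num [expCMul_zero]

section Comb

variable {R : Type*} [CommRing R] {ι : Type*} [DecidableEq ι]

lemma sumA (s : Finset ι) (x : ι → R) :
    ∑ S ∈ s.powerset, (-1 : R) ^ S.card * ∏ i ∈ S, x i = ∏ i ∈ s, (1 - x i) := by
  induction s using Finset.induction_on with
  | empty => simp
  | @insert a s ha ih =>
    rw [Finset.sum_powerset_insert ha]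
    have h2 : ∑ S ∈ s.powerset, (-1 : R) ^ (insert a S).card * ∏ i ∈ insert a S, x i
        = ∑ S ∈ s.powerset, (-x a) * ((-1 : R) ^ S.card * ∏ i ∈ S, x i) := by
      refine Finset.sum_congr rfl fun S hS => ?_
      have haS : a ∉ S := fun h => ha (Finset.mem_powerset.mp hS h)
      rw [Finset.card_insert_of_notMem haS, Finset.prod_insert haS, pow_succ]
      ring
    rw [h2, ← Finset.mul_sum, ih, Finset.prod_insert ha]
    ring

lemma L_insert (a : ι) (s : Finset ι) (ha : a ∉ s) (x : ι → R) :
    ∑ S ∈ (insert a s).powerset, (-1 : R) ^ S.card * (S.card + 1) * ∏ i ∈ S, x i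
      = (1 - x a) * (∑ S ∈ s.powerset, (-1 : R) ^ S.card * (S.card + 1) * ∏ i ∈ S, x i)
        - x a * ∏ i ∈ s, (1 - x i) := by
  rw [Finset.sum_powerset_insert ha]
  have h2 : ∑ S ∈ s.powerset,
        (-1 : R) ^ (insert a S).card * ((insert a S).card + 1) * ∏ i ∈ insert a S, x i
      = ∑ S ∈ s.powerset, (-x a) * ((-1 : R) ^ S.card * (S.card + 1) * ∏ i ∈ S, x i
          + (-1 : R) ^ S.card * ∏ i ∈ S, x i) := by
    refine Finset.sum_congr rfl fun S hS => ?_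
    have haS : a ∉ S := fun h => ha (Finset.mem_powerset.mp hS h)
    rw [Finset.card_insert_of_notMem haS, Finset.prod_insert haS]
    push_cast
    ring
  rw [h2, ← Finset.mul_sum, Finset.sum_add_distrib, sumA]
  ring

lemma main_aux {κ : Type*} [DecidableEq κ] (t : Finset κ) (x : κ × Bool → R)
    (h : ∀ l ∈ t, x (l, true) * x (l, false) = 1) :
    ∑ S ∈ (t ×ˢ (univ : Finset Bool)).powerset,
        (-1 : R) ^ S.card * (S.card + 1) * ∏ p ∈ S, x p
      = (t.card + 1) * ∏ l ∈ t, (1 - x (l, true)) * (1 - x (l, false)) := by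
  induction t using Finset.induction_on with
  | empty => simp
  | @insert a t ha ih =>
    have hprod : (insert a t) ×ˢ (univ : Finset Bool)
        = insert (a, true) (insert (a, false) (t ×ˢ univ)) := by
      ext ⟨l, b⟩
      simp only [Finset.mem_insert, Finset.mem_product, Finset.mem_univ, and_true,
        Prod.ext_iff, Prod.mk.injEq]
      cases b <;> tauto
    have h1 : (a, false) ∉ t ×ˢ (univ : Finset Bool) := by simp [ha]
    have h2 : (a, true) ∉ insert (a, false) (t ×ˢ (univ : Finset Bool)) := by simp [ha]
    have key : x (a, true) * x (a, false) = 1 := h a (Finset.mem_insert_self a t)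
    have ih' := ih (fun l hl => h l (Finset.mem_insert_of_mem hl))
    rw [hprod, L_insert _ _ h2, L_insert _ _ h1, Finset.prod_insert h1, ih',
      Finset.card_insert_of_notMem ha, Finset.prod_insert ha]
    have hP : ∏ p ∈ t ×ˢ (univ : Finset Bool), (1 - x p)
        = ∏ l ∈ t, (1 - x (l, true)) * (1 - x (l, false)) := by
      rw [Finset.prod_product]
      exact Finset.prod_congr rfl fun l _ => by rw [Fintype.prod_bool]
    rw [hP]
    push_cast
    linear_combination (∏ l ∈ t, (1 - x (l, true)) * (1 - x (l, false))) * key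

end Comb

/-- In `ℚ[[y₁,…,y_m]]` one has
`∑_{j=0}^{2m} (−1)ʲ(j+1)·s_j(e^{y₁},e^{−y₁},…,e^{y_m},e^{−y_m})
  = (m+1)·∏_{j=1}^m (1−e^{y_j})(1−e^{−y_j})`,
where `s_j` is the `j`-th elementary symmetric polynomial of the `2m` listed
exponentials (indexed here by `Fin m × Bool`, with `true` standing for `+y` and
`false` for `−y`). -/
theorem stmt_3 (m : ℕ) :
    ∑ j ∈ range (2 * m + 1),
        (MvPowerSeries.C : ℚ →+* MvPowerSeries (Fin m) ℚ) ((-1 : ℚ) ^ j * (j + 1)) *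
          ∑ S ∈ powersetCard j (univ : Finset (Fin m × Bool)),
            ∏ p ∈ S, expCMul (if p.2 then 1 else -1) p.1
      = (MvPowerSeries.C : ℚ →+* MvPowerSeries (Fin m) ℚ) (m + 1) *
          ∏ l : Fin m, (1 - expCMul 1 l) * (1 - expCMul (-1) l) := by
  have hcard : ((univ : Finset (Fin m × Bool)).card) = 2 * m := by
    simp [Finset.card_univ, mul_comm]
  have step1 : ∑ j ∈ range (2 * m + 1),
        (MvPowerSeries.C : ℚ →+* MvPowerSeries (Fin m) ℚ) ((-1 : ℚ) ^ j * (j + 1)) *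
          ∑ S ∈ powersetCard j (univ : Finset (Fin m × Bool)),
            ∏ p ∈ S, expCMul (if p.2 then 1 else -1) p.1
      = ∑ S ∈ (univ : Finset (Fin m × Bool)).powerset,
          (-1 : MvPowerSeries (Fin m) ℚ) ^ S.card * (S.card + 1) *
            ∏ p ∈ S, expCMul (if p.2 then 1 else -1) p.1 := by
    rw [Finset.sum_powerset, hcard]
    refine Finset.sum_congr rfl fun j hj => ?_
    rw [Finset.mul_sum]
    refine Finset.sum_congr rfl fun S hS => ?_
    have hSc : S.card = j := (Finset.mem_powersetCard.mp hS).2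
    rw [hSc, map_mul, map_pow, map_neg, map_one, map_add, map_natCast, map_one]
  rw [step1]
  have key := main_aux (univ : Finset (Fin m))
    (fun p => expCMul (if p.2 then 1 else -1) p.1)
    (fun l _ => by simpa using expCMul_one_mul_neg_one l)
  rw [Finset.univ_product_univ] at key
  simp only [if_true, if_false, Bool.false_eq_true] at key
  rw [key, Finset.card_univ, Fintype.card_fin, map_add, map_natCast, map_one]
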